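/- For odd k ≥ 7, with lexicographic order a < b, for every even i with 4 ≤ i ≤ k−3 there is no suffix x of F_k with F_{i+1} < x < F_i·F_{i+1} (i.e., the suffix F_{i+1} of F_k is the immediate lexicographic predecessor, among suffixes of F_k, of the suffix F_i·F_{i+1}). -/

import Mathlib

/-- Strings over the binary alphabet `{a, b}`: `false` is `a`, `true` is `b`. -/
abbrev Word := List Bool

/-- `w` is primitive if it is not of the form `x^j` for any `j ≥ 2`. -/
def Primitive (w : Word) : Prop := ¬ ∃ (x : Word) (j : ℕ), 2 ≤ j ∧ w = (List.replicate j x).flatten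

/-- `u` occurs in `w` at (0-indexed) position `i`. -/
def occursAt (u w : Word) (i : ℕ) : Prop :=
  i + u.length ≤ w.length ∧ (w.drop i).take u.length = u

instance (u w : Word) (i : ℕ) : Decidable (occursAt u w i) := by
  unfold occursAt; infer_instance

/-- Fibonacci words: `F 1 = b`, `F 2 = a`, `F (k+1) = F k ++ F (k-1)`. -/
def F : ℕ → Word
  | 0 => []
  | 1 => [true]
  | 2 => [false]
  | (n+3) => F (n+2) ++ F (n+1)

/-- Fibonacci numbers with `f 1 = f 2 = 1`. -/
def f : ℕ → ℕ
  | 0 => 0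
  | 1 => 1
  | (n+2) => f (n+1) + f n

/-- The morphism `φ(a) = aab`, `φ(b) = ab`. -/
def phi (w : Word) : Word := w.flatMap fun c => if c then [false, true] else [false, false, true]

/-- Lexicographic order on words induced by `a < b` (a proper prefix is smaller). -/
def wlt (x y : Word) : Prop := List.Lex (· < ·) x y

/-- `u` is a border of `w`: a proper substring that is both a prefix and a suffix. -/
def IsBorder (u w : Word) : Prop := u ≠ w ∧ u <+: w ∧ u <:+ w

/-- `w` is a Lyndon word: it is smaller than all of its proper nonempty suffixes. -/
def IsLyndon (w : Word) : Prop := ∀ s : Word, s <:+ w → s ≠ [] → s ≠ w → wlt w s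

/-- `fs` is the Lyndon factorization of `w`: a factorization into nonempty Lyndon
words that is lexicographically non-increasing (powers written as repetitions). -/
def IsLyndonFactorization (w : Word) (fs : List Word) : Prop :=
  fs.flatten = w ∧ (∀ x ∈ fs, IsLyndon x ∧ x ≠ []) ∧ List.Chain' (fun x y => ¬ wlt x y) fs

/-- `ℓ 1 = ab`, `ℓ (k+1) = φ (ℓ k)`. -/
def ell : ℕ → Word
  | 0 => []
  | 1 => [false, true]
  | (n+2) => phi (ell (n+1))

lemma F_three (n : ℕ) : F (n+3) = F (n+2) ++ F (n+1) := rfl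

lemma Flen : ∀ n, (F n).length = f n
  | 0 => rfl
  | 1 => rfl
  | 2 => rfl
  | (n+3) => by
    rw [F_three, List.length_append, Flen (n+2), Flen (n+1)]; rfl

lemma fpos : ∀ n, 1 ≤ n → 1 ≤ f n
  | 1, _ => le_refl 1
  | 2, _ => le_refl 1
  | (n+3), _ => by
    have := fpos (n+2) (by omega)
    show 1 ≤ f (n+2) + f (n+1); omega

lemma fmono : Monotone f := by
  apply monotone_nat_of_le_succ
  intro n
  match n with
  | 0 => exact Nat.zero_le _
  | 1 => exact le_refl _
  | (n+2) =>
    have := fpos (n+1) (by omega)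
    show f (n+2) ≤ f (n+2) + f (n+1); omega

lemma fstrict {a b : ℕ} (ha : 2 ≤ a) (hab : a < b) : f a < f b := by
  obtain ⟨m, rfl⟩ : ∃ m, a = m + 2 := ⟨a - 2, by omega⟩
  have h1 : f (m+3) ≤ f b := fmono (by omega)
  have h2 : f (m+3) = f (m+2) + f (m+1) := rfl
  have := fpos (m+1) (by omega)
  omega

lemma PC {a b : ℕ} (ha : 2 ≤ a) (hab : a ≤ b) : F a <+: F b := by
  induction b with
  | zero => omega
  | succ b ih =>
    rcases Nat.lt_or_ge a (b+1) with h | h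
    · have hb : 2 ≤ b := by omega
      obtain ⟨m, rfl⟩ : ∃ m, b = m + 2 := ⟨b - 2, by omega⟩
      exact (ih (by omega)).trans (List.prefix_append _ _)
    · have : a = b + 1 := by omega
      subst this; exact List.prefix_refl _

lemma SC : ∀ (m a : ℕ), F a <:+ F (a + 2*m)
  | 0, a => by simp
  | (m+1), a => by
    have h1 : F a <:+ F (a + 2*m) := SC m a
    match h : a + 2*m with
    | 0 =>
      have : a = 0 := by omega
      subst this; simp [F]
    | (n+1) =>
      have : a + 2*(m+1) = n + 3 := by omega
      rw [this, F_three]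
      have : a + 2*m = n + 1 := by omega
      rw [this] at h1
      exact h1.trans (List.suffix_append _ _)

lemma suffix_of_suffix_length_le {a b c : Word} (h : a <:+ c) (h2 : b <:+ c)
    (hl : a.length ≤ b.length) : a <:+ b := by
  rw [← List.reverse_prefix] at h h2 ⊢
  exact List.prefix_of_prefix_length_le h h2 (by simpa using hl)

lemma suffix_split {x u v : Word} (h : x <:+ u ++ v) (hl : v.length ≤ x.length) :
    ∃ q, q <:+ u ∧ x = q ++ v := by
  have hv : v <:+ x := suffix_of_suffix_length_le (List.suffix_append u v) h hl
  obtain ⟨q, rfl⟩ := hv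
  obtain ⟨w, hw⟩ := h
  refine ⟨q, ⟨w, ?_⟩, rfl⟩
  rw [← List.append_assoc] at hw
  exact List.append_cancel_right hw

-- endings
lemma End_step (n : ℕ) (w e : Word) (h : F (n+1) = w ++ e) :
    F (n+3) = (F (n+2) ++ w) ++ e := by
  rw [F_three, h, List.append_assoc]

lemma End_odd' : ∀ m, ∃ w, F (2*m+3) = w ++ [false, true]
  | 0 => ⟨[], rfl⟩
  | (m+1) => by
    obtain ⟨w, hw⟩ := End_odd' m
    have h2 : 2*(m+1)+3 = (2*m+2)+3 := by ring
    have h3 : 2*m+3 = (2*m+2)+1 := by ring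
    rw [h3] at hw
    exact ⟨F (2*m+2+2) ++ w, by rw [h2]; exact End_step _ _ _ hw⟩

lemma End_even' : ∀ m, ∃ w, F (2*m+4) = w ++ [true, false]
  | 0 => ⟨[false], rfl⟩
  | (m+1) => by
    obtain ⟨w, hw⟩ := End_even' m
    have h2 : 2*(m+1)+4 = (2*m+3)+3 := by ring
    have h3 : 2*m+4 = (2*m+3)+1 := by ring
    rw [h3] at hw
    exact ⟨F (2*m+3+2) ++ w, by rw [h2]; exact End_step _ _ _ hw⟩

lemma End_odd (n : ℕ) (h3 : 3 ≤ n) (hodd : n % 2 = 1) : ∃ w, F n = w ++ [false, true] := by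
  obtain ⟨m, rfl⟩ : ∃ m, n = 2*m+3 := ⟨(n-3)/2, by omega⟩
  exact End_odd' m

lemma End_even (n : ℕ) (h4 : 4 ≤ n) (heven : n % 2 = 0) : ∃ w, F n = w ++ [true, false] := by
  obtain ⟨m, rfl⟩ : ∃ m, n = 2*m+4 := ⟨(n-4)/2, by omega⟩
  exact End_even' m

-- swap lemma
lemma SW : ∀ a, ∃ (w : Word) (x y : Bool), x ≠ y ∧
    F (a+1) ++ F (a+2) = w ++ [x, y] ∧ F (a+2) ++ F (a+1) = w ++ [y, x]
  | 0 => ⟨[], true, false, by decide, rfl, rfl⟩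
  | (a+1) => by
    obtain ⟨w, x, y, hxy, h1, h2⟩ := SW a
    refine ⟨F (a+2) ++ w, y, x, hxy.symm, ?_, ?_⟩
    · show F (a+2) ++ F (a+3) = (F (a+2) ++ w) ++ [y, x]
      calc F (a+2) ++ F (a+3) = F (a+2) ++ (F (a+2) ++ F (a+1)) := by rw [F_three]
        _ = F (a+2) ++ (w ++ [y, x]) := by rw [h2]
        _ = (F (a+2) ++ w) ++ [y, x] := by rw [List.append_assoc]
    · show F (a+3) ++ F (a+2) = (F (a+2) ++ w) ++ [x, y]
      calc F (a+3) ++ F (a+2) = (F (a+2) ++ F (a+1)) ++ F (a+2) := by rw [F_three]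
        _ = F (a+2) ++ (F (a+1) ++ F (a+2)) := by rw [List.append_assoc]
        _ = F (a+2) ++ (w ++ [x, y]) := by rw [h1]
        _ = (F (a+2) ++ w) ++ [x, y] := by rw [List.append_assoc]

-- lex lemmas
lemma not_wlt_append (u w : Word) : ¬ wlt (u ++ w) u := by
  induction u with
  | nil => intro h; cases h
  | cons a u ih =>
    intro h
    cases h with
    | rel h' => exact absurd h' (lt_irrefl a)
    | cons h' => exact ih h'

lemma not_wlt_of_prefix {u v : Word} (h : u <+: v) : ¬ wlt v u := by
  obtain ⟨w, rfl⟩ := h; exact not_wlt_append u w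

lemma wlt_append_ne (u w : Word) (hw : w ≠ []) : wlt u (u ++ w) := by
  induction u with
  | nil =>
    cases w with
    | nil => exact absurd rfl hw
    | cons b l => exact List.Lex.nil
  | cons a u ih => exact List.Lex.cons ih

lemma wlt_append_iff (w u v : Word) : wlt (w ++ u) (w ++ v) ↔ wlt u v := by
  induction w with
  | nil => exact Iff.rfl
  | cons a w ih =>
    constructor
    · intro h
      cases h with
      | rel h' => exact absurd h' (lt_irrefl a)
      | cons h' => exact ih.mp h'
    · intro h
      exact List.Lex.cons (ih.mpr h)

lemma wlt_sandwich : ∀ (u x z : Word), wlt u x → wlt x (u ++ z) → u <+: x := by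
  intro u
  induction u with
  | nil => intro x z _ _; exact List.nil_prefix
  | cons a u ih =>
    intro x z h1 h2
    cases x with
    | nil => cases h1
    | cons b x' =>
      cases h1 with
      | rel hab =>
        cases h2 with
        | rel hba => exact absurd (lt_trans hab hba) (lt_irrefl a)
        | cons h2' => exact absurd hab (lt_irrefl a)
      | cons h1' =>
        cases h2 with
        | rel hba => exact absurd hba (lt_irrefl a)
        | cons h2' => exact List.cons_prefix_cons.mpr ⟨rfl, ih x' z h1' h2'⟩

lemma wlt_append_cases : ∀ (u w v : Word), wlt (u ++ w) v → wlt u v ∨ u <+: v := by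
  intro u
  induction u with
  | nil => intro w v _; exact Or.inr List.nil_prefix
  | cons a u ih =>
    intro w v h
    cases v with
    | nil => cases h
    | cons b v' =>
      cases h with
      | rel h' => exact Or.inl (List.Lex.rel h')
      | cons h' =>
        rcases ih w v' h' with h'' | h''
        · exact Or.inl (List.Lex.cons h'')
        · exact Or.inr (List.cons_prefix_cons.mpr ⟨rfl, h''⟩)

lemma wlt_trans : ∀ {a b c : Word}, wlt a b → wlt b c → wlt a c := by
  intro a b c h1 h2
  induction b generalizing a c with
  | nil => cases h1
  | cons y l ih =>
    cases h1 with
    | nil =>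
      cases h2 with
      | rel _ => exact List.Lex.nil
      | cons _ => exact List.Lex.nil
    | rel h =>
      cases h2 with
      | rel h' => exact List.Lex.rel (lt_trans h h')
      | cons _ => exact List.Lex.rel h
    | cons h =>
      cases h2 with
      | rel h' => exact List.Lex.rel h'
      | cons h' => exact List.Lex.cons (ih h h')

lemma NC_oriented (a b : ℕ) (ha : 2 ≤ a) (hb : 2 ≤ b) (hao : a % 2 = 1) (hbe : b % 2 = 0) :
    F a ++ F b ≠ F b ++ F a := by
  obtain ⟨wa, hwa⟩ := End_odd a (by omega) hao
  have key : ∃ u v : Word, F a ++ F b = u ++ [true, false] ∧ F b ++ F a = v ++ [false, true] := by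
    rcases eq_or_lt_of_le hb with h2 | h4
    · refine ⟨wa ++ [false], [false] ++ wa, ?_, ?_⟩
      · rw [← h2]; show F a ++ [false] = _; rw [hwa]; simp
      · rw [← h2]; show [false] ++ F a = _; rw [hwa]; simp
    · obtain ⟨wb, hwb⟩ := End_even b (by omega) hbe
      exact ⟨F a ++ wb, F b ++ wa, by rw [hwb, ← List.append_assoc],
        by rw [hwa, ← List.append_assoc]⟩
  obtain ⟨u, v, h1, h2⟩ := key
  intro heq
  rw [h1, h2] at heq
  have hl : u.length = v.length := by
    have := congrArg List.length heq; simp at this; omega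
  have := List.append_inj_right heq hl
  simp at this

lemma NC_ne (a b : ℕ) (ha : 2 ≤ a) (hb : 2 ≤ b) (hpar : a % 2 ≠ b % 2) :
    F a ++ F b ≠ F b ++ F a := by
  rcases Nat.even_or_odd a with hae | hao
  · have hae' : a % 2 = 0 := Nat.even_iff.mp hae
    have hb1 : b % 2 = 1 := by omega
    intro h
    exact NC_oriented b a hb ha hb1 hae' h.symm
  · have hao' : a % 2 = 1 := Nat.odd_iff.mp hao
    have hb0 : b % 2 = 0 := by omega
    intro h
    exact NC_oriented a b ha hb hao' hb0 h

lemma border_lemma : ∀ n, ∀ s : Word, s <+: F n → s <:+ F n → s ≠ [] → s.length < f n →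
    ∃ j, 2 ≤ j ∧ j + 2 ≤ n ∧ j % 2 = n % 2 ∧ s = F j := by
  intro n
  induction n using Nat.strong_induction_on with | _ n ih => ?_
  intro s hpre hsuf hne hlen
  have hspos : 0 < s.length := List.length_pos_iff.mpr hne
  match n, ih with
  | 0, ih => exact absurd hlen (by show ¬ _ < 0; omega)
  | 1, ih => exact absurd hlen (by show ¬ _ < 1; omega)
  | 2, ih => exact absurd hlen (by show ¬ _ < 1; omega)
  | 3, ih =>
    have hl2 : s.length = 1 := by have h2 : f 3 = 2 := rfl; omega
    have hs := List.suffix_iff_eq_drop.mp hsuf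
    rw [hl2, show F 3 = [false, true] from rfl] at hs
    simp at hs
    rw [hs] at hpre
    exact absurd hpre (by decide)
  | (m+4), ih =>
    have hrec : F (m+4) = F (m+3) ++ F (m+2) := rfl
    have hf4 : f (m+4) = f (m+3) + f (m+2) := rfl
    have hf3 : f (m+3) = f (m+2) + f (m+1) := rfl
    have hf2pos := fpos (m+2) (by omega)
    have hf1pos := fpos (m+1) (by omega)
    rcases le_or_gt s.length (f (m+2)) with hle | hgt
    · -- s is within the suffix copy F (m+2)
      have hFpre : F (m+2) <+: F (m+4) := PC (by omega) (by omega)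
      have hp2 : s <+: F (m+2) :=
        List.prefix_of_prefix_length_le hpre hFpre (by rw [Flen]; exact hle)
      have hFsuf : F (m+2) <:+ F (m+4) := by rw [hrec]; exact List.suffix_append _ _
      have hs2 : s <:+ F (m+2) := suffix_of_suffix_length_le hsuf hFsuf (by rw [Flen]; exact hle)
      rcases eq_or_lt_of_le hle with heq | hlt
      · exact ⟨m+2, by omega, by omega, by omega, hp2.eq_of_length (by rw [Flen]; exact heq)⟩
      · obtain ⟨j, hj1, hj2, hj3, hj4⟩ := ih (m+2) (by omega) s hp2 hs2 hne hlt
        exact ⟨j, hj1, by omega, by omega, hj4⟩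
    · by_cases htop : s.length = f (m+4) - 1
      · -- near-full border: contradiction on first letter
        obtain ⟨w, hw⟩ := PC (a := 3) (b := m+4) (by omega) (by omega)
        have hFw : F (m+4) = false :: true :: w := by rw [← hw]; rfl
        have hdrop := List.suffix_iff_eq_drop.mp hsuf
        rw [Flen, htop] at hdrop
        have hfpos : 1 ≤ f (m+4) := fpos _ (by omega)
        rw [show f (m+4) - (f (m+4) - 1) = 1 from by omega, hFw] at hdrop
        simp at hdrop
        have htake := List.prefix_iff_eq_take.mp hpre
        rw [hFw] at htake
        obtain ⟨L, hL⟩ : ∃ L, s.length = L + 1 := ⟨s.length - 1, by omega⟩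
        rw [hL] at htake
        rw [hdrop] at htake
        simp at htake
      · -- middle zone: impossible
        set e := s.length - f (m+2) with he
        have he1 : 1 ≤ e := by omega
        have he2 : e ≤ f (m+3) - 2 := by omega
        -- q : the suffix part
        have hsuf' : s <:+ F (m+3) ++ F (m+2) := by rw [← hrec]; exact hsuf
        obtain ⟨q, hq_suf, hq_eq⟩ := suffix_split hsuf'
          (by rw [Flen]; omega)
        have hq_len : q.length = e := by
          have := congrArg List.length hq_eq
          rw [List.length_append, Flen] at this; omega
        have hq_pre_s : q <+: s := by rw [hq_eq]; exact List.prefix_append _ _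
        have hq_pre : q <+: F (m+3) := List.prefix_of_prefix_length_le (hq_pre_s.trans hpre)
          (by rw [hrec]; exact List.prefix_append _ _) (by rw [hq_len, Flen]; omega)
        have hq_ne : q ≠ [] := by
          intro h; rw [h] at hq_len; simp at hq_len; omega
        obtain ⟨j, hj1, hj2, hj3, hj4⟩ := ih (m+3) (by omega) q hq_pre hq_suf hq_ne
          (by rw [hq_len]; omega)
        -- r : the prefix part
        have hF2pre_s : F (m+2) <+: s := List.prefix_of_prefix_length_le
          (PC (by omega) (by omega) : F (m+2) <+: F (m+4)) hpre (by rw [Flen]; omega)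
        obtain ⟨r, hr_eq⟩ := hF2pre_s
        have hr_len : r.length = e := by
          have := congrArg List.length hr_eq
          rw [List.length_append, Flen] at this; omega
        have hmid : F (m+4) = F (m+2) ++ (F (m+1) ++ F (m+2)) := by
          rw [hrec, F_three m, List.append_assoc]
        have hs_mid : s <+: F (m+2) ++ (F (m+1) ++ F (m+2)) := hmid ▸ hpre
        rw [← hr_eq] at hs_mid
        have hr_pre : r <+: F (m+1) ++ F (m+2) := (List.prefix_append_right_inj _).mp hs_mid
        obtain ⟨w, x, y, hxy, hsw1, hsw2⟩ := SW m
        have hw_len : w.length + 2 = f (m+3) := by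
          have := congrArg List.length hsw1
          rw [List.length_append, List.length_append, Flen, Flen] at this
          simp at this; omega
        have hr_pre_w : r <+: w := by
          rw [hsw1] at hr_pre
          exact List.prefix_of_prefix_length_le hr_pre (List.prefix_append w _)
            (by rw [hr_len]; omega)
        have hr_pre3 : r <+: F (m+3) := by
          rw [F_three m, hsw2]
          exact hr_pre_w.trans (List.prefix_append _ _)
        have hfj : f j = e := by rw [hj4, Flen] at hq_len; exact hq_len
        have hFj_pre3 : F j <+: F (m+3) := PC hj1 (by omega)
        have hr_eq_Fj : r = F j :=
          (List.prefix_of_prefix_length_le hr_pre3 hFj_pre3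
            (by rw [hr_len, Flen, hfj])).eq_of_length (by rw [hr_len, Flen, hfj])
        have hcomm : F j ++ F (m+2) = F (m+2) ++ F j := by
          calc F j ++ F (m+2) = q ++ F (m+2) := by rw [hj4]
            _ = s := hq_eq.symm
            _ = F (m+2) ++ r := hr_eq.symm
            _ = F (m+2) ++ F j := by rw [hr_eq_Fj]
        exact absurd hcomm (NC_ne j (m+2) hj1 (by omega) (by omega))

lemma wlt_of_prefix_ne {u v : Word} (h : u <+: v) (hne : u ≠ v) : wlt u v := by
  obtain ⟨w, rfl⟩ := h
  apply wlt_append_ne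
  intro hw
  rw [hw, List.append_nil] at hne
  exact hne rfl

lemma plt (m : ℕ) (hm : m % 2 = 0) : wlt (F (m+2) ++ F (m+3)) (F (m+4)) := by
  obtain ⟨w, x, y, hxy, hsw1, hsw2⟩ := SW (m+1)
  obtain ⟨w3, hw3⟩ := End_odd (m+3) (by omega) (by omega)
  have h1 : F (m+2) ++ F (m+3) = (F (m+2) ++ w3) ++ [false, true] := by
    rw [hw3, List.append_assoc]
  have hxy' : ([x, y] : Word) = [false, true] := by
    have heq : w ++ [x, y] = (F (m+2) ++ w3) ++ [false, true] := by rw [← hsw1, h1]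
    have hl : w.length = (F (m+2) ++ w3).length := by
      have := congrArg List.length heq
      simp [List.length_append] at this
      rw [List.length_append]
      omega
    exact List.append_inj_right heq hl
  have hx : x = false := (List.cons_eq_cons.mp hxy').1
  have hy : y = true := (List.cons_eq_cons.mp (List.cons_eq_cons.mp hxy').2).1
  subst hx hy
  rw [show F (m+4) = F (m+3) ++ F (m+2) from rfl, hsw2, hsw1]
  exact (wlt_append_iff w _ _).mpr (List.Lex.rel (by decide))

lemma key (m : ℕ) (hm : m % 2 = 0) :
    ∀ k (y : Word), F (m+5) ++ y <:+ F k → y ≠ [] → ¬ wlt y (F (m+2) ++ F (m+3)) := by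
  intro k
  induction k using Nat.strong_induction_on with | _ k ih => ?_
  intro y hsuf hy hlt
  have hylen : 0 < y.length := List.length_pos_iff.mpr hy
  have hxlen : f (m+5) + y.length ≤ f k := by
    have := hsuf.length_le
    rw [List.length_append, Flen, Flen] at this
    exact this
  have hk : m + 6 ≤ k := by
    by_contra h
    have : f k ≤ f (m+5) := fmono (by omega)
    omega
  obtain ⟨K, rfl⟩ : ∃ K, k = K + 3 := ⟨k - 3, by omega⟩
  have hK : m + 3 ≤ K := by omega
  have hfK : f (K+3) = f (K+2) + f (K+1) := rfl
  rcases le_or_gt (f (m+5) + y.length) (f (K+1)) with hcase | hcase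
  · -- the whole suffix lies in the final F (K+1) block
    have h1 : F (K+1) <:+ F (K+3) := by rw [F_three]; exact List.suffix_append _ _
    have h2 : F (m+5) ++ y <:+ F (K+1) := suffix_of_suffix_length_le hsuf h1
      (by rw [List.length_append, Flen, Flen]; exact hcase)
    exact ih (K+1) (by omega) y h2 hy hlt
  · have hsuf' : F (m+5) ++ y <:+ F (K+2) ++ F (K+1) := by rw [← F_three]; exact hsuf
    obtain ⟨s, hs_suf, hs_eq⟩ := suffix_split hsuf'
      (by rw [List.length_append, Flen, Flen]; omega)
    have hs_len : s.length = f (m+5) + y.length - f (K+1) := by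
      have := congrArg List.length hs_eq
      rw [List.length_append, List.length_append, Flen, Flen] at this; omega
    have hs_pos : 0 < s.length := by omega
    rcases le_or_gt (f (m+5)) s.length with hb1 | hb2
    · -- aligned: s itself starts with F (m+5)
      have htk := congrArg (List.take (f (m+5))) hs_eq
      rw [List.take_append_of_le_length (by rw [Flen]),
          List.take_append_of_le_length (by omega)] at htk
      rw [show (F (m+5)).take (f (m+5)) = F (m+5) from by rw [← Flen, List.take_length]] at htk
      have hpre5 : F (m+5) <+: s :=
        ⟨s.drop (f (m+5)), by rw [htk]; exact List.take_append_drop _ s⟩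
      obtain ⟨s', hs'_eq⟩ := hpre5
      have hy_eq : y = s' ++ F (K+1) := by
        apply List.append_cancel_left (as := F (m+5))
        rw [hs_eq, ← hs'_eq, List.append_assoc]
      rcases eq_or_ne s' [] with rfl | hs'ne
      · -- y = F (K+1)
        have hyK : y = F (K+1) := by simpa using hy_eq
        have hplt := plt m hm
        have h45 : F (m+4) <+: F (K+1) := PC (by omega) (by omega)
        rw [hyK] at hlt
        exact not_wlt_of_prefix h45 (wlt_trans hlt hplt)
      · have hss : F (m+5) ++ s' <:+ F (K+2) := by rw [hs'_eq]; exact hs_suf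
        have hnot := ih (K+2) (by omega) s' hss hs'ne
        rw [hy_eq] at hlt
        rcases wlt_append_cases s' (F (K+1)) _ hlt with h | h
        · exact hnot h
        · rcases eq_or_ne s' (F (m+2) ++ F (m+3)) with rfl | hne2
          · exact not_wlt_append _ _ hlt
          · exact hnot (wlt_of_prefix_ne h hne2)
    · -- crossing occurrence
      have htk := congrArg (List.take s.length) hs_eq
      rw [List.take_append_of_le_length (by rw [Flen]; omega), List.take_left] at htk
      have hs_pre5 : s <+: F (m+5) := by rw [← htk]; exact List.take_prefix _ _
      obtain ⟨t, ht_eq⟩ := hs_pre5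
      have ht_len : t.length = f (m+5) - s.length := by
        have := congrArg List.length ht_eq
        rw [List.length_append, Flen] at this; omega
      have ht_ne : t ≠ [] := by
        intro h; rw [h] at ht_len; simp at ht_len; omega
      have ht_suf : t <:+ F (m+5) := ⟨s, ht_eq⟩
      have htY : t ++ y = F (K+1) := by
        apply List.append_cancel_left (as := s)
        rw [← List.append_assoc, ht_eq]
        exact hs_eq
      have ht_pre : t <+: F (K+1) := ⟨y, htY⟩
      have ht_pre5 : t <+: F (m+5) := by
        rcases le_or_gt (m+5) (K+1) with hh | hh
        · exact List.prefix_of_prefix_length_le ht_pre (PC (by omega) hh)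
            (by rw [Flen]; omega)
        · have hKe : K = m + 3 := by omega
          subst hKe
          have h5 : F (m+5) = F (m+4) ++ F (m+3) := rfl
          rw [h5]
          exact ht_pre.trans (List.prefix_append _ _)
      obtain ⟨j, hj1, hj2, hj3, hj4⟩ := border_lemma (m+5) t ht_pre5 ht_suf ht_ne
        (by omega)
      have hs_pre_K2 : s <+: F (K+2) := by
        rw [← htk]
        exact (List.take_prefix _ _).trans (PC (by omega) (by omega))
      have hs_ne : s ≠ [] := by intro h; rw [h] at hs_pos; simp at hs_pos
      have hs_lt : s.length < f (K+2) := by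
        have : f (m+5) ≤ f (K+2) := fmono (by omega)
        omega
      obtain ⟨j', hj'1, hj'2, hj'3, hj'4⟩ := border_lemma (K+2) s hs_pre_K2 hs_suf hs_ne hs_lt
      have hlj : t.length = f j := by rw [hj4, Flen]
      have hlj' : s.length = f j' := by rw [hj'4, Flen]
      have hlenjj : f j' + f j = f (m+5) := by omega
      have hjodd : j % 2 = 1 := by omega
      have hf5 : f (m+5) = f (m+4) + f (m+3) := rfl
      have hf4 : f (m+4) = f (m+3) + f (m+2) := rfl
      have hf3pos := fpos (m+3) (by omega)
      have hf2pos := fpos (m+2) (by omega)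
      have hcases : j = m+3 ∨ j ≤ m+1 := by omega
      rcases hcases with rfl | hsmall
      · -- genuine crossing: j = m+3
        have hfj' : f j' = f (m+4) := by omega
        have hj'_eq : j' = m + 4 := by
          rcases lt_trichotomy j' (m+4) with h | h | h
          · have h1 : f j' ≤ f (m+3) := fmono (by omega)
            omega
          · exact h
          · have h1 : f (m+5) ≤ f j' := fmono (by omega)
            omega
        have hK4 : m + 4 ≤ K := by omega
        obtain ⟨z, hz⟩ := PC (a := m+5) (b := K+1) (by omega) (by omega)
        have h53 : F (m+5) = F (m+3) ++ (F (m+2) ++ F (m+3)) := by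
          rw [show F (m+5) = F (m+4) ++ F (m+3) from rfl,
              show F (m+4) = F (m+3) ++ F (m+2) from rfl, List.append_assoc]
        have hy_eq : y = (F (m+2) ++ F (m+3)) ++ z := by
          apply List.append_cancel_left (as := F (m+3))
          calc F (m+3) ++ y = t ++ y := by rw [hj4]
            _ = F (K+1) := htY
            _ = F (m+5) ++ z := hz.symm
            _ = (F (m+3) ++ (F (m+2) ++ F (m+3))) ++ z := by rw [← h53]
            _ = F (m+3) ++ ((F (m+2) ++ F (m+3)) ++ z) := by rw [List.append_assoc]
        rw [hy_eq] at hlt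
        exact not_wlt_append _ _ hlt
      · -- impossible crossing
        have hj3' : 3 ≤ j := by omega
        have hfj_lt : f j < f (m+3) := fstrict hj1 (by omega)
        have hup : f (m+4) < f j' := by omega
        have hlo : f j' < f (m+5) := by
          have := fpos j (by omega); omega
        rcases le_or_gt j' (m+4) with h | h
        · have := fmono h
          omega
        · have : f (m+5) ≤ f j' := fmono (by omega)
          omega

/-- For odd `k ≥ 7` and even `i` with `4 ≤ i ≤ k−3`, there is no suffix `x` of
`F k` strictly between `F (i+1)` and `F i ++ F (i+1)` in lexicographic order. -/
theorem stmt19 (k i : ℕ) (hk : 7 ≤ k) (hkodd : Odd k) (hieven : Even i)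
    (hi1 : 4 ≤ i) (hi2 : i ≤ k - 3) :
    ¬ ∃ x : Word, x <:+ F k ∧ wlt (F (i + 1)) x ∧ wlt x (F i ++ F (i + 1)) := by
  rintro ⟨x, hsuf, h1, h2⟩
  obtain ⟨m, rfl⟩ : ∃ m, i = m + 4 := ⟨i - 4, by omega⟩
  have hm : m % 2 = 0 := by
    rcases hieven with ⟨t, ht⟩; omega
  have hident : F (m+4) ++ F (m+4+1) = F (m+4+1) ++ (F (m+2) ++ F (m+3)) := by
    show F (m+4) ++ F (m+5) = F (m+5) ++ (F (m+2) ++ F (m+3))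
    rw [show F (m+5) = F (m+4) ++ F (m+3) from rfl,
        show F (m+4) = F (m+3) ++ F (m+2) from rfl]
    simp [List.append_assoc]
  rw [hident] at h2
  have hpre : F (m+4+1) <+: x := wlt_sandwich _ _ _ h1 h2
  obtain ⟨y, hy_eq⟩ := hpre
  have hy_ne : y ≠ [] := by
    rintro rfl
    rw [List.append_nil] at hy_eq
    rw [← hy_eq] at h1
    have := not_wlt_append (F (m+4+1)) []
    rw [List.append_nil] at this
    exact this h1
  rw [← hy_eq] at h2 hsuf
  have hylt : wlt y (F (m+2) ++ F (m+3)) := (wlt_append_iff _ _ _).mp h2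
  exact key m hm k y (by exact hsuf) hy_ne hylt
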